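/- (Łoś's theorem for the ultrapower of the set-theoretic universe.) ∼_U is an equivalence relation on 𝒲, ∈_U is invariant under ∼_U in both arguments, and for every L_ε-formula φ(x₀,…,x_{n-1}) and all f₀,…,f_{n-1} ∈ 𝒲, the quotient structure (𝒲/∼_U, ∈_U) satisfies φ([f₀],…,[f_{n-1}]) if and only if {x ∈ I : φ(f₀(x),…,f_{n-1}(x)) holds in (ZFSet, ∈)} ∈ U. (Single-universe form of Claim 2.2.2.) -/

import Mathlib

open FirstOrder

/-- The language `L_ε` with a single binary relation symbol (Mathlib's graph language,
whose unique binary relation we interpret as membership). -/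
abbrev Lε : FirstOrder.Language := FirstOrder.Language.graph

/-- Any type with a binary relation is an `L_ε`-structure. -/
def memStruc (S : Type*) (r : S → S → Prop) : Lε.Structure S where
  RelMap | .adj => fun x => r (x 0) (x 1)

/-- Satisfaction of an `L_ε`-formula in the structure given by a binary relation `r` on `S`. -/
def RealizeIn (S : Type*) (r : S → S → Prop) {n : ℕ}
    (φ : Lε.Formula (Fin n)) (v : Fin n → S) : Prop :=
  @FirstOrder.Language.Formula.Realize Lε S (memStruc S r) _ φ v

/-- `f` is a ZFSet-function: a single-valued set of (Kuratowski) ordered pairs. -/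
def IsZFFunc (f : ZFSet) : Prop :=
  (∀ p ∈ f, ∃ x y : ZFSet, p = ZFSet.pair x y) ∧
    ∀ x y y' : ZFSet, ZFSet.pair x y ∈ f → ZFSet.pair x y' ∈ f → y = y'

/-- The domain of a ZFSet-function. -/
def dom (f : ZFSet) : ZFSet :=
  ZFSet.sep (fun x => ∃ y : ZFSet, ZFSet.pair x y ∈ f) (ZFSet.sUnion (ZFSet.sUnion f))

/-- `f` is a ZFSet-function with domain `I`. -/
def IsFuncOn (I f : ZFSet) : Prop := IsZFFunc f ∧ dom f = I

open Classical in
/-- The value `f(x)` of a ZFSet-function at `x`. -/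
noncomputable def app (f x : ZFSet) : ZFSet :=
  if h : ∃ y : ZFSet, ZFSet.pair x y ∈ f then h.choose else ∅

/-- `U` is an ultrafilter on the family of ZFSet-subsets of `I`: `∅ ∉ U`, every member of
`U` is a subset of `I`, `U` is closed under binary intersections and under supersets among
subsets of `I`, and for every `A ⊆ I` either `A ∈ U` or `I ∖ A ∈ U`. -/
def IsZUltrafilterOn (I : ZFSet) (U : Set ZFSet) : Prop :=
  (∅ : ZFSet) ∉ U ∧ (∀ A ∈ U, A ⊆ I) ∧ (∀ A ∈ U, ∀ B ∈ U, A ∩ B ∈ U) ∧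
    (∀ A ∈ U, ∀ B : ZFSet, A ⊆ B → B ⊆ I → B ∈ U) ∧
    (∀ A : ZFSet, A ⊆ I → (A ∈ U ∨ I \ A ∈ U))

/-- `U` is fine: `{x ∈ I : x₀ ⊆ x} ∈ U` for every `x₀ ∈ I`. -/
def IsZFineOn (I : ZFSet) (U : Set ZFSet) : Prop :=
  ∀ x₀ ∈ I, ZFSet.sep (fun x => x₀ ⊆ x) I ∈ U

/-- `U` is normal: the diagonal intersection of any `λ`-indexed family of members of `U`
belongs to `U`. -/
def IsZNormalOn (lam I : ZFSet) (U : Set ZFSet) : Prop :=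
  ∀ A : ZFSet → ZFSet, (∀ ξ ∈ lam, A ξ ∈ U) →
    ZFSet.sep (fun x => ∀ ξ ∈ x, x ∈ A ξ) I ∈ U

/-- The collection `𝒲` of ZFSet-functions with domain `I`. -/
abbrev W (I : ZFSet) := {f : ZFSet // IsFuncOn I f}

/-- `f ∼_U g` iff `{x ∈ I : f(x) = g(x)} ∈ U`. -/
def simW (I : ZFSet) (U : Set ZFSet) (f g : W I) : Prop :=
  ZFSet.sep (fun x => app f.1 x = app g.1 x) I ∈ U

/-- `f ∈_U g` iff `{x ∈ I : f(x) ∈ g(x)} ∈ U`. -/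
def memW (I : ZFSet) (U : Set ZFSet) (f g : W I) : Prop :=
  ZFSet.sep (fun x => app f.1 x ∈ app g.1 x) I ∈ U

/-- The ultrapower `𝒲/∼_U`. -/
def QW (I : ZFSet) (U : Set ZFSet) := Quot (simW I U)

/-- The relation `∈_U` induced on the quotient `𝒲/∼_U`: two classes are related iff they
have `∈_U`-related representatives (for a congruence this is the usual induced relation). -/
def memQW (I : ZFSet) (U : Set ZFSet) (a b : QW I U) : Prop :=
  ∃ f g : W I, a = Quot.mk (simW I U) f ∧ b = Quot.mk (simW I U) g ∧ memW I U f g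

/-! ### Auxiliary machinery for Claim 2.2.2 -/

namespace Claim222Aux

open Filter FirstOrder.Language

instance : Nonempty ZFSet := ⟨∅⟩

instance zStruc : Lε.Structure ZFSet := memStruc ZFSet (· ∈ ·)

instance qStruc (I : ZFSet) (U : Set ZFSet) : Lε.Structure (QW I U) :=
  memStruc _ (memQW I U)

/-- The index type: elements of `I`. -/
abbrev Idx (I : ZFSet) := {x : ZFSet // x ∈ I}

lemma sep_congr {I : ZFSet} {P Q : ZFSet → Prop} (h : ∀ x, x ∈ I → (P x ↔ Q x)) :
    ZFSet.sep P I = ZFSet.sep Q I := by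
  apply ZFSet.ext
  intro y
  simp only [ZFSet.mem_sep]
  exact and_congr_right (h y)

lemma sep_subset {I : ZFSet} {P : ZFSet → Prop} : ZFSet.sep P I ⊆ I :=
  fun _ hy => (ZFSet.mem_sep.1 hy).1

section UF

variable {I : ZFSet} {U : Set ZFSet} (hUF : IsZUltrafilterOn I U)

/-- The ZFSet coding a set of indices. -/
def zset (I : ZFSet) (s : Set (Idx I)) : ZFSet :=
  ZFSet.sep (fun x => ∀ h : x ∈ I, (⟨x, h⟩ : Idx I) ∈ s) I

omit hUF in
lemma mem_zset {s : Set (Idx I)} {x : ZFSet} :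
    x ∈ zset I s ↔ ∃ h : x ∈ I, (⟨x, h⟩ : Idx I) ∈ s := by
  rw [zset, ZFSet.mem_sep]
  constructor
  · rintro ⟨hx, h⟩; exact ⟨hx, h hx⟩
  · rintro ⟨hx, h⟩; exact ⟨hx, fun _ => h⟩

include hUF

lemma I_mem_U : I ∈ U := by
  rcases hUF.2.2.2.2 I (fun _ h => h) with h | h
  · exact h
  · exact absurd h (by
      have : I \ I = (∅ : ZFSet) := by
        apply ZFSet.ext; intro y
        simp [ZFSet.mem_sdiff]
      rw [this]; exact hUF.1)

omit hUF in
lemma zset_mem_iff {s : Set (Idx I)} {P : ZFSet → Prop}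
    (h : ∀ (x : ZFSet) (hx : x ∈ I), (⟨x, hx⟩ : Idx I) ∈ s ↔ P x) :
    (zset I s ∈ U ↔ ZFSet.sep P I ∈ U) := by
  rw [zset, sep_congr (Q := P) (fun x hx => by
    constructor
    · intro hall; exact (h x hx).1 (hall hx)
    · intro hp _; exact (h x hx).2 hp)]

/-- The genuine ultrafilter on the index type induced by `U`. -/
def uUF : Ultrafilter (Idx I) :=
  Ultrafilter.ofComplNotMemIff
    { sets := {s | zset I s ∈ U}
      univ_sets := by
        have : zset I Set.univ = I := by
          apply ZFSet.ext; intro y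
          simp [mem_zset]
        simpa [Set.mem_setOf_eq, this] using I_mem_U hUF
      sets_of_superset := by
        intro s t hs hsub
        refine hUF.2.2.2.1 _ hs _ ?_ sep_subset
        intro y hy
        rw [mem_zset] at hy ⊢
        exact ⟨hy.1, hsub hy.2⟩
      inter_sets := by
        intro s t hs ht
        have h := hUF.2.2.1 _ hs _ ht
        have heq : zset I s ∩ zset I t = zset I (s ∩ t) := by
          apply ZFSet.ext; intro y
          simp only [ZFSet.mem_inter, mem_zset, Set.mem_inter_iff]
          constructor
          · rintro ⟨⟨hyI, h1⟩, ⟨hyI2, h2⟩⟩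
            exact ⟨hyI, h1, h2⟩
          · rintro ⟨hyI, h1, h2⟩
            exact ⟨⟨hyI, h1⟩, ⟨hyI, h2⟩⟩
        show zset I (s ∩ t) ∈ U
        rwa [heq] at h }
    (by
      intro s
      constructor
      · intro hc
        show zset I s ∈ U
        by_contra hs
        rcases hUF.2.2.2.2 (zset I s) sep_subset with h | h
        · exact hs h
        · refine hc ?_
          show zset I sᶜ ∈ U
          have heq : I \ zset I s = zset I sᶜ := by
            apply ZFSet.ext; intro y
            simp only [ZFSet.mem_sdiff, mem_zset, Set.mem_compl_iff]
            constructor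
            · rintro ⟨hyI, hns⟩
              exact ⟨hyI, fun hmem => hns ⟨hyI, hmem⟩⟩
            · rintro ⟨hyI, hns⟩
              exact ⟨hyI, fun hc' => hns hc'.2⟩
          rwa [heq] at h
      · intro hs hc
        have h := hUF.2.2.1 _ hs _ hc
        have heq : zset I s ∩ zset I sᶜ = (∅ : ZFSet) := by
          apply ZFSet.ext; intro y
          simp only [ZFSet.mem_inter, mem_zset, Set.mem_compl_iff,
            ZFSet.notMem_empty, iff_false, not_and]
          rintro ⟨hyI, h1⟩ ⟨hyI2, h2⟩
          exact h2 h1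
        rw [heq] at h
        exact hUF.1 h)

lemma mem_uUF {P : ZFSet → Prop} :
    {a : Idx I | P a.1} ∈ uUF hUF ↔ ZFSet.sep P I ∈ U := by
  show zset I _ ∈ U ↔ _
  exact zset_mem_iff (fun x hx => Iff.rfl)

end UF

section App

lemma app_eq {f x y : ZFSet} (hf : IsZFFunc f) (h : ZFSet.pair x y ∈ f) :
    app f x = y := by
  have hex : ∃ y, ZFSet.pair x y ∈ f := ⟨y, h⟩
  rw [app, dif_pos hex]
  exact hf.2 x _ y hex.choose_spec h

lemma pair_app_mem {I f : ZFSet} (hf : IsFuncOn I f) {x : ZFSet} (hx : x ∈ I) :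
    ZFSet.pair x (app f x) ∈ f := by
  have hx' : x ∈ dom f := hf.2 ▸ hx
  rw [dom, ZFSet.mem_sep] at hx'
  obtain ⟨-, y, hy⟩ := hx'
  rwa [app_eq hf.1 hy]

/-- The ZFSet-function with domain `I` coding `g`. -/
noncomputable def funcOf (I : ZFSet) (g : ZFSet → ZFSet) : ZFSet :=
  @ZFSet.image (fun x => ZFSet.pair x (g x)) (Classical.allZFSetDefinable _) I

lemma mem_funcOf {I : ZFSet} {g : ZFSet → ZFSet} {y : ZFSet} :
    y ∈ funcOf I g ↔ ∃ x ∈ I, ZFSet.pair x (g x) = y :=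
  @ZFSet.mem_image (fun x => ZFSet.pair x (g x)) (Classical.allZFSetDefinable _) I y

lemma funcOf_isFuncOn (I : ZFSet) (g : ZFSet → ZFSet) : IsFuncOn I (funcOf I g) := by
  constructor
  · constructor
    · intro p hp
      obtain ⟨x, hx, rfl⟩ := mem_funcOf.1 hp
      exact ⟨x, g x, rfl⟩
    · intro x y y' hy hy'
      obtain ⟨z, hz, hpz⟩ := mem_funcOf.1 hy
      obtain ⟨z', hz', hpz'⟩ := mem_funcOf.1 hy'
      obtain ⟨rfl, rfl⟩ := ZFSet.pair_injective hpz
      obtain ⟨rfl, rfl⟩ := ZFSet.pair_injective hpz'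
      rfl
  · apply ZFSet.ext
    intro x
    rw [dom, ZFSet.mem_sep]
    constructor
    · rintro ⟨-, y, hy⟩
      obtain ⟨z, hz, hpz⟩ := mem_funcOf.1 hy
      obtain ⟨rfl, rfl⟩ := ZFSet.pair_injective hpz
      exact hz
    · intro hx
      have hmem : ZFSet.pair x (g x) ∈ funcOf I g := mem_funcOf.2 ⟨x, hx, rfl⟩
      refine ⟨?_, g x, hmem⟩
      refine ZFSet.mem_sUnion_of_mem (z := ({x} : ZFSet)) ?_ ?_
      · exact ZFSet.mem_singleton.2 rfl
      · refine ZFSet.mem_sUnion_of_mem (z := ZFSet.pair x (g x)) ?_ hmem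
        rw [ZFSet.pair]
        exact ZFSet.mem_insert _ _

lemma funcOf_app {I : ZFSet} (g : ZFSet → ZFSet) {x : ZFSet} (hx : x ∈ I) :
    app (funcOf I g) x = g x :=
  app_eq (funcOf_isFuncOn I g).1 (mem_funcOf.2 ⟨x, hx, rfl⟩)

end App

section Main

variable {I : ZFSet} {U : Set ZFSet} (hUF : IsZUltrafilterOn I U)

/-- The function `Idx I → ZFSet` associated to `f ∈ 𝒲`. -/
noncomputable def Phi (f : W I) : Idx I → ZFSet := fun a => app f.1 a.1

include hUF

lemma simW_iff (f g : W I) : simW I U f g ↔ Phi f =ᶠ[uUF hUF] Phi g :=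
  (mem_uUF hUF (P := fun x => app f.1 x = app g.1 x)).symm

lemma memW_iff (f g : W I) :
    memW I U f g ↔ ∀ᶠ a in (uUF hUF : Filter (Idx I)), Phi f a ∈ Phi g a :=
  (mem_uUF hUF (P := fun x => app f.1 x ∈ app g.1 x)).symm

lemma simW_equiv : Equivalence (simW I U) := by
  constructor
  · intro f; exact (simW_iff hUF f f).2 EventuallyEq.rfl
  · intro f g h; exact (simW_iff hUF g f).2 ((simW_iff hUF f g).1 h).symm
  · intro f g h h1 h2
    exact (simW_iff hUF f h).2 (((simW_iff hUF f g).1 h1).trans ((simW_iff hUF g h).1 h2))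

lemma memW_congr (f f' g g' : W I) (hf : simW I U f f') (hg : simW I U g g') :
    memW I U f g ↔ memW I U f' g' := by
  rw [memW_iff hUF, memW_iff hUF]
  have hf' := (simW_iff hUF f f').1 hf
  have hg' := (simW_iff hUF g g').1 hg
  constructor
  · intro h
    filter_upwards [hf', hg', h] with a e1 e2 hm
    rw [← e1, ← e2]; exact hm
  · intro h
    filter_upwards [hf', hg', h] with a e1 e2 hm
    rw [e1, e2]; exact hm

/-- The canonical map from the ZF-coded ultrapower to Mathlib's ultraproduct. -/
noncomputable def psi : QW I U → ((uUF hUF : Filter (Idx I)).Product fun _ => ZFSet) :=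
  Quot.lift (fun f => Quotient.mk ((uUF hUF : Filter (Idx I)).productSetoid fun _ => ZFSet) (Phi f))
    (fun f g h => Quotient.sound ((simW_iff hUF f g).1 h))

lemma psi_mk (f : W I) :
    psi hUF (Quot.mk (simW I U) f) =
      Quotient.mk ((uUF hUF : Filter (Idx I)).productSetoid fun _ => ZFSet) (Phi f) :=
  rfl

lemma psi_bij : Function.Bijective (psi hUF) := by
  constructor
  · intro a b
    induction a using Quot.ind with | _ f =>
    induction b using Quot.ind with | _ g =>
    intro h
    exact Quot.sound ((simW_iff hUF f g).2 (Quotient.exact h))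
  · intro q
    induction q using Quotient.ind with | _ F =>
    classical
    refine ⟨Quot.mk _ ⟨funcOf I (fun x => if h : x ∈ I then F ⟨x, h⟩ else ∅),
      funcOf_isFuncOn _ _⟩, ?_⟩
    rw [psi_mk]
    apply Quotient.sound
    apply (Filter.eventuallyEq_iff_exists_mem (l := (uUF hUF : Filter (Idx I)))).2
    refine ⟨Set.univ, Filter.univ_mem, fun a _ => ?_⟩
    show app (funcOf I _) a.1 = F a
    rw [funcOf_app _ a.2, dif_pos a.2]

lemma memQW_mk (f g : W I) :
    memQW I U (Quot.mk (simW I U) f) (Quot.mk (simW I U) g) ↔ memW I U f g := by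
  constructor
  · rintro ⟨f', g', hf, hg, h⟩
    have hf' : simW I U f f' :=
      (simW_iff hUF f f').2 (Quotient.exact (congrArg (psi hUF) hf))
    have hg' : simW I U g g' :=
      (simW_iff hUF g g').2 (Quotient.exact (congrArg (psi hUF) hg))
    exact (memW_congr hUF f f' g g' hf' hg').2 h
  · intro h
    exact ⟨f, g, rfl, rfl, h⟩

lemma relMap_psi (a b : QW I U) :
    Structure.RelMap (M := (uUF hUF : Filter (Idx I)).Product fun _ => ZFSet) Language.adj
      ![psi hUF a, psi hUF b] ↔ memQW I U a b := by
  obtain ⟨f, rfl⟩ := Quot.exists_rep a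
  obtain ⟨g, rfl⟩ := Quot.exists_rep b
  rw [memQW_mk hUF]
  have hcomp : (![psi hUF (Quot.mk (simW I U) f), psi hUF (Quot.mk (simW I U) g)] :
      Fin 2 → (uUF hUF : Filter (Idx I)).Product fun _ => ZFSet) =
      fun i => Quotient.mk ((uUF hUF : Filter (Idx I)).productSetoid fun _ => ZFSet)
        ((![Phi f, Phi g] : Fin 2 → Idx I → ZFSet) i) := by
    funext i
    fin_cases i <;> rfl
  rw [hcomp]
  exact Iff.trans
    (relMap_quotient_mk' ((uUF hUF : Filter (Idx I)).productSetoid fun _ => ZFSet)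
      Language.adj ![Phi f, Phi g])
    ((memW_iff hUF f g).symm)

/-- The canonical map as an `Lε`-isomorphism. -/
noncomputable def lequiv :
    @Language.Equiv Lε (QW I U) ((uUF hUF : Filter (Idx I)).Product fun _ => ZFSet)
      (qStruc I U) inferInstance where
  toEquiv := Equiv.ofBijective _ (psi_bij hUF)
  map_fun' := fun {n} F _ => by exact Empty.elim F
  map_rel' := by
    intro n r x
    cases r with
    | adj =>
      show Structure.RelMap Language.adj (fun i => psi hUF (x i)) ↔
        Structure.RelMap (M := QW I U) Language.adj x
      have hc : (fun i => psi hUF (x i)) = ![psi hUF (x 0), psi hUF (x 1)] := by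
        funext i
        fin_cases i <;> rfl
      rw [hc]
      exact relMap_psi hUF (x 0) (x 1)

end Main

end Claim222Aux

/-- Claim 2.2.2 (single-universe form, Łoś's theorem for the ultrapower of the universe):
`∼_U` is an equivalence relation on `𝒲`, `∈_U` is invariant under `∼_U` in both arguments,
and the quotient structure `⟨𝒲/∼_U, ∈_U⟩` satisfies `φ([f₀],…,[f_{n-1}])` iff
`{x ∈ I : φ(f₀(x),…,f_{n-1}(x))} ∈ U`. -/
theorem claim_2_2_2 (I : ZFSet) (U : Set ZFSet) (hUF : IsZUltrafilterOn I U) :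
    Equivalence (simW I U) ∧
      (∀ f f' g g' : W I, simW I U f f' → simW I U g g' →
        (memW I U f g ↔ memW I U f' g')) ∧
      (∀ (n : ℕ) (φ : Lε.Formula (Fin n)) (fs : Fin n → W I),
        RealizeIn (QW I U) (memQW I U) φ (fun i => Quot.mk (simW I U) (fs i)) ↔
          ZFSet.sep (fun x => RealizeIn ZFSet (· ∈ ·) φ (fun i => app (fs i).1 x)) I ∈ U) := by
  refine ⟨Claim222Aux.simW_equiv hUF, fun f f' g g' => Claim222Aux.memW_congr hUF f f' g g', ?_⟩
  intro n φ fs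
  exact Iff.trans
    (FirstOrder.Language.StrongHomClass.realize_formula (M := QW I U) (Claim222Aux.lequiv hUF) φ
      (v := fun i => Quot.mk (simW I U) (fs i))).symm
    (Iff.trans
      (FirstOrder.Language.Ultraproduct.realize_formula_cast φ
        (fun i => Claim222Aux.Phi (fs i)))
      (Claim222Aux.mem_uUF hUF
        (P := fun x => RealizeIn ZFSet (· ∈ ·) φ (fun i => app (fs i).1 x))))
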